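/- Every C*-embedded subspace of an F-space is an F-space. -/

import Mathlib

open Set Cardinal Topology

/-- `U` is a cozero set: the set where some continuous real-valued function is nonzero. -/
def IsCozero {X : Type*} [TopologicalSpace X] (U : Set X) : Prop :=
  ∃ f : C(X, ℝ), U = {x | f x ≠ 0}

/-- `A` is C*-embedded in `X`: every continuous function `A → [0,1]` extends continuously. -/
def IsCStarEmbedded {X : Type*} [TopologicalSpace X] (A : Set X) : Prop :=
  ∀ f : C(A, Set.Icc (0:ℝ) 1), ∃ g : C(X, Set.Icc (0:ℝ) 1), ∀ a : A, g a = f a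

/-- `X` is an F-space: every cozero set is C*-embedded. -/
def IsFSpace (X : Type*) [TopologicalSpace X] : Prop :=
  ∀ U : Set X, IsCozero U → IsCStarEmbedded U

/-- `A` is a P-set: closed, and countable intersections of neighborhoods of `A`
are neighborhoods of `A`. -/
def IsPSet {X : Type*} [TopologicalSpace X] (A : Set X) : Prop :=
  IsClosed A ∧ ∀ N : ℕ → Set X, (∀ n, N n ∈ 𝓝ˢ A) → (⋂ n, N n) ∈ 𝓝ˢ A

/-- `x` is a P-point: countable intersections of neighborhoods of `x` are neighborhoods. -/
def IsPPoint {X : Type*} [TopologicalSpace X] (x : X) : Prop :=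
  ∀ N : ℕ → Set X, (∀ n, N n ∈ 𝓝 x) → (⋂ n, N n) ∈ 𝓝 x

/-- `A` is nicely placed: every open neighborhood of `A` contains a cozero set containing `A`. -/
def IsNicelyPlaced {X : Type*} [TopologicalSpace X] (A : Set X) : Prop :=
  ∀ U : Set X, IsOpen U → A ⊆ U → ∃ V : Set X, IsCozero V ∧ A ⊆ V ∧ V ⊆ U

/-- `F` is an Fσ set: a countable union of closed sets. -/
def IsFSigma {X : Type*} [TopologicalSpace X] (F : Set X) : Prop :=
  ∃ A : ℕ → Set X, (∀ n, IsClosed (A n)) ∧ F = ⋃ n, A n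

theorem cstar_embedded_subspace_of_FSpace_is_FSpace
    {X : Type*} [TopologicalSpace X] [T35Space X] (A : Set X)
    (hA : IsCStarEmbedded A) (hX : IsFSpace X) : IsFSpace A := by
  rintro U ⟨f, rfl⟩ h
  -- f₀ : truncated absolute value of f, valued in [0,1], same cozero set
  set f₀ : A → ℝ := fun a => min |f a| 1 with hf₀def
  have hf₀c : Continuous f₀ := (continuous_abs.comp f.continuous).min continuous_const
  have hf₀mem : ∀ a, f₀ a ∈ Icc (0:ℝ) 1 := fun a =>
    ⟨le_min (abs_nonneg _) zero_le_one, min_le_right _ _⟩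
  have hUf₀ : ∀ a : A, f a ≠ 0 → f₀ a ≠ 0 := fun a hfa =>
    ne_of_gt (lt_min (abs_pos.mpr hfa) one_pos)
  have hf₀zero : ∀ a : A, f a = 0 → f₀ a = 0 := by
    intro a hfa; simp [hf₀def, hfa]
  -- k₀ : h multiplied by f₀, extended by 0
  set k₀ : A → ℝ := fun a => if ha : f a ≠ 0 then (h ⟨a, ha⟩ : ℝ) * f₀ a else 0 with hk₀def
  have hk₀nonneg : ∀ a, 0 ≤ k₀ a := by
    intro a
    by_cases ha : f a ≠ 0
    · simp only [hk₀def, dif_pos ha]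
      exact mul_nonneg (h ⟨a, ha⟩).2.1 (hf₀mem a).1
    · simp only [hk₀def]
      rw [dif_neg ha]
  have hk₀le : ∀ a, k₀ a ≤ f₀ a := by
    intro a
    by_cases ha : f a ≠ 0
    · simp only [hk₀def, dif_pos ha]
      calc (h ⟨a, ha⟩ : ℝ) * f₀ a ≤ 1 * f₀ a :=
            mul_le_mul_of_nonneg_right (h ⟨a, ha⟩).2.2 (hf₀mem a).1
        _ = f₀ a := one_mul _
    · simp only [hk₀def, dif_neg ha]
      exact (hf₀mem a).1
  have hk₀mem : ∀ a, k₀ a ∈ Icc (0:ℝ) 1 :=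
    fun a => ⟨hk₀nonneg a, (hk₀le a).trans (hf₀mem a).2⟩
  have hUopen : IsOpen {a : A | f a ≠ 0} :=
    isOpen_compl_singleton.preimage f.continuous
  have hk₀on : ContinuousOn k₀ {a : A | f a ≠ 0} := by
    rw [continuousOn_iff_continuous_restrict]
    have heq : Set.domRestrict {a : A | f a ≠ 0} k₀ =
        fun u : {a : A | f a ≠ 0} => (h u : ℝ) * f₀ u.1 := by
      funext u
      have hu2 : f (u : A) ≠ 0 := u.2
      simp only [Set.domRestrict_apply, hk₀def]
      rw [dif_pos hu2]
    rw [heq]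
    exact (continuous_subtype_val.comp h.continuous).mul (hf₀c.comp continuous_subtype_val)
  have hk₀c : Continuous k₀ := by
    rw [continuous_iff_continuousAt]
    intro a
    by_cases ha : f a ≠ 0
    · exact hk₀on.continuousAt (hUopen.mem_nhds ha)
    · push_neg at ha
      have hfa0 : f₀ a = 0 := hf₀zero a ha
      have hka0 : k₀ a = 0 := by simp [hk₀def, ha]
      rw [ContinuousAt, hka0]
      have htend : Filter.Tendsto f₀ (nhds a) (nhds 0) := by
        have := hf₀c.continuousAt (x := a)
        rwa [ContinuousAt, hfa0] at this
      exact squeeze_zero hk₀nonneg hk₀le htend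
  -- package into Icc-valued continuous maps
  set f' : C(A, Icc (0:ℝ) 1) := ⟨fun a => ⟨f₀ a, hf₀mem a⟩, hf₀c.subtype_mk _⟩ with hf'def
  set k : C(A, Icc (0:ℝ) 1) := ⟨fun a => ⟨k₀ a, hk₀mem a⟩, hk₀c.subtype_mk _⟩ with hkdef
  obtain ⟨G, hG⟩ := hA f'
  obtain ⟨K, hK⟩ := hA k
  -- the cozero set of G in X
  set V : Set X := {x | (G x : ℝ) ≠ 0} with hVdef
  have hVcoz : IsCozero V :=
    ⟨⟨fun x => (G x : ℝ), continuous_subtype_val.comp G.continuous⟩, rfl⟩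
  have hH₀c : Continuous (fun v : V => (K v : ℝ) / (G v : ℝ)) :=
    (continuous_subtype_val.comp (K.continuous.comp continuous_subtype_val)).div
      (continuous_subtype_val.comp (G.continuous.comp continuous_subtype_val))
      (fun v => v.2)
  set H : C(V, Icc (0:ℝ) 1) :=
    ⟨fun v => projIcc 0 1 zero_le_one ((K v : ℝ) / (G v : ℝ)),
      continuous_projIcc.comp hH₀c⟩ with hHdef
  obtain ⟨H', hH'⟩ := hX V hVcoz H
  refine ⟨⟨fun a => H' a, H'.continuous.comp continuous_subtype_val⟩, ?_⟩
  intro u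
  have hu : f (u : A) ≠ 0 := u.2
  have hGu : (G ((u : A) : X) : ℝ) = f₀ (u : A) := by
    rw [hG (u : A)]; rfl
  have hxV : ((u : A) : X) ∈ V := by
    rw [mem_setOf_eq, hGu]
    exact hUf₀ _ hu
  have hKu : (K ((u : A) : X) : ℝ) = (h u : ℝ) * f₀ (u : A) := by
    rw [hK (u : A)]
    simp only [hkdef, ContinuousMap.coe_mk, hk₀def, dif_pos hu]
  have := hH' ⟨((u : A) : X), hxV⟩
  simp only [ContinuousMap.coe_mk]
  rw [show ((u : A) : X) = ((⟨((u : A) : X), hxV⟩ : V) : X) from rfl, this]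
  simp only [hHdef, ContinuousMap.coe_mk, hKu, hGu]
  rw [mul_div_assoc, div_self (hUf₀ _ hu), mul_one]
  exact projIcc_val zero_le_one (h u)
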